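/- Let p ∈ P^log(ℝⁿ) with 1 ≤ p(x) ≤ p⁺ < ∞ and let q ∈ P^loglog(ℝⁿ) be nonnegative. Then there is a constant C > 0, depending only on n and the constants and bounds of p and q, such that for every cube Q ⊂ ℝⁿ: φ^{-1}_{1/(1/p)_Q, (q/p)_Q/(1/p)_Q}(1/|Q|) ≤ C ⨍_Q φ^{-1}_{p(x), q(x)}(1/|Q|) dx, where (1/p)_Q = ⨍_Q 1/p and (q/p)_Q = ⨍_Q q/p. -/

import Mathlib

open MeasureTheory ENNReal NNReal Set

noncomputable section

abbrev Rn (n : ℕ) := EuclideanSpace ℝ (Fin n)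

namespace VarExp

variable {n : ℕ}

/-- Closed axis-parallel cube with center `c` and sidelength `l`. -/
def cubeSet (c : Rn n) (l : ℝ) : Set (Rn n) := {x | ∀ i, |x i - c i| ≤ l / 2}

/-- Characteristic function of a set. -/
def chi (s : Set (Rn n)) : Rn n → ℝ := s.indicator fun _ => 1

/-- Average of `b` over the cube with center `c` and sidelength `l`. -/
def cavg (c : Rn n) (l : ℝ) (b : Rn n → ℝ) : ℝ := ⨍ x in cubeSet c l, b x

/-- Global log-Hölder continuity with explicit constants. -/
def LogHolderWith (p : Rn n → ℝ) (C pinf : ℝ) : Prop :=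
  (∀ x y : Rn n, |p x - p y| ≤ C / Real.log (Real.exp 1 + 1 / ‖x - y‖)) ∧
  (∀ x : Rn n, |p x - pinf| ≤ C / Real.log (Real.exp 1 + ‖x‖))

/-- Global log-Hölder continuity (the class `P^log`). -/
def LogHolder (p : Rn n → ℝ) : Prop := ∃ C pinf : ℝ, 0 < C ∧ LogHolderWith p C pinf

/-- The class `P^loglog`: bounded and loglog-Hölder continuous. -/
def LogLogHolder (q : Rn n → ℝ) : Prop :=
  (∃ M : ℝ, ∀ x, |q x| ≤ M) ∧
  ∃ C : ℝ, 0 < C ∧ ∀ x y : Rn n,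
    |q x - q y| ≤ C / Real.log (Real.exp 1 + Real.log (Real.exp 1 + 1 / ‖x - y‖))

/-- Pointwise conjugate exponent. -/
def conj (t : ℝ) : ℝ := t / (t - 1)

/-- Luxemburg norm (with values in `ℝ≥0∞`) of an `ℝ≥0∞`-valued function for a
variable exponent `p`. -/
def vnormE (p : Rn n → ℝ) (f : Rn n → ℝ≥0∞) : ℝ≥0∞ :=
  sInf {lam : ℝ≥0∞ | ∃ l : ℝ, 0 < l ∧ lam = ENNReal.ofReal l ∧
    ∫⁻ x, (f x / ENNReal.ofReal l) ^ p x ≤ 1}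

/-- Variable exponent Lebesgue (Luxemburg) norm. -/
def vnorm (p : Rn n → ℝ) (f : Rn n → ℝ) : ℝ≥0∞ :=
  vnormE p fun x => ENNReal.ofReal |f x|

/-- `φ_p(x,t)` for an extended exponent : `t^p` if `p < ∞`, and `∞·χ_{(1,∞)}(t)` if `p = ∞`. -/
def phiExp (pe : ℝ≥0∞) (t : ℝ≥0∞) : ℝ≥0∞ :=
  if pe = ⊤ then (if t ≤ 1 then 0 else ⊤) else t ^ pe.toReal

/-- Luxemburg norm for an extended (possibly infinite) variable exponent. -/
def vnormX (p : Rn n → ℝ≥0∞) (f : Rn n → ℝ) : ℝ≥0∞ :=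
  sInf {lam : ℝ≥0∞ | ∃ l : ℝ, 0 < l ∧ lam = ENNReal.ofReal l ∧
    ∫⁻ x, phiExp (p x) (ENNReal.ofReal (|f x| / l)) ≤ 1}

/-- The Musielak–Orlicz norm of the space `L^{p(·)}(log L)^{q(·)}`. -/
def llognorm (p q : Rn n → ℝ) (f : Rn n → ℝ) : ℝ≥0∞ :=
  sInf {lam : ℝ≥0∞ | ∃ l : ℝ, 0 < l ∧ lam = ENNReal.ofReal l ∧
    ∫⁻ x, ENNReal.ofReal ((|f x| / l) ^ p x *
      Real.log (Real.exp 1 + |f x| / l) ^ q x) ≤ 1}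

/-- Generalized Φ-function. -/
def IsGPhi (Ψ : Rn n → ℝ → ℝ≥0∞) : Prop :=
  (∀ t : ℝ, Measurable fun x => Ψ x t) ∧
  (∀ x, ConvexOn ℝ≥0 (Ici (0:ℝ)) (Ψ x)) ∧
  (∀ x, Ψ x 0 = 0) ∧
  (∀ x, Filter.Tendsto (Ψ x) (nhdsWithin 0 (Ioi 0)) (nhds 0)) ∧
  (∀ x, Filter.Tendsto (Ψ x) Filter.atTop (nhds ⊤))

/-- Luxemburg norm associated to a generalized Φ-function. -/
def gnorm (Ψ : Rn n → ℝ → ℝ≥0∞) (f : Rn n → ℝ) : ℝ≥0∞ :=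
  sInf {lam : ℝ≥0∞ | ∃ l : ℝ, 0 < l ∧ lam = ENNReal.ofReal l ∧
    ∫⁻ x, Ψ x (|f x| / l) ≤ 1}

/-- Generalized inverse of a generalized Φ-function. -/
def ginv (Ψ : Rn n → ℝ → ℝ≥0∞) (x : Rn n) (t : ℝ≥0∞) : ℝ :=
  sInf {u : ℝ | 0 ≤ u ∧ t ≤ Ψ x u}

/-- Conjugate (Legendre transform) of a generalized Φ-function. -/
def gconj (Ψ : Rn n → ℝ → ℝ≥0∞) (x : Rn n) (u : ℝ) : ℝ≥0∞ :=
  ⨆ t : Ici (0:ℝ), ENNReal.ofReal (t.1 * u) - Ψ x t.1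

/-- Condition 𝓕 on a triple of generalized Φ-functions. -/
def CondF (A B D : Rn n → ℝ → ℝ≥0∞) : Prop :=
  ∃ C : ℝ, 0 < C ∧
    (∀ (c : Rn n) (l : ℝ), 0 < l →
      gnorm A (chi (cubeSet c l)) * gnorm B (chi (cubeSet c l)) ≤
        ENNReal.ofReal C * gnorm D (chi (cubeSet c l))) ∧
    (∀ (x : Rn n) (t : ℝ≥0∞), ginv A x t * ginv B x t ≤ C * ginv D x t) ∧
    (∀ (c : Rn n) (l : ℝ), 0 < l →
      gnorm D (chi (cubeSet c l)) * gnorm (gconj D) (chi (cubeSet c l)) ≤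
        ENNReal.ofReal (C * l ^ n))

/-- Maximal operator associated to a generalized Φ-function. -/
def gmax (Ψ : Rn n → ℝ → ℝ≥0∞) (f : Rn n → ℝ) (x : Rn n) : ℝ≥0∞ :=
  ⨆ (c : Rn n) (l : ℝ) (_ : 0 < l) (_ : x ∈ cubeSet c l),
    gnorm Ψ ((cubeSet c l).indicator f) / gnorm Ψ (chi (cubeSet c l))

/-- Fractional maximal operator associated to a generalized Φ-function, where the
fractional exponent `β` is allowed to take the value `∞`. -/
def gmaxFrac (β : Rn n → ℝ≥0∞) (Ψ : Rn n → ℝ → ℝ≥0∞) (f : Rn n → ℝ) (x : Rn n) : ℝ≥0∞ :=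
  ⨆ (c : Rn n) (l : ℝ) (_ : 0 < l) (_ : x ∈ cubeSet c l),
    vnormX β (chi (cubeSet c l)) *
      gnorm Ψ ((cubeSet c l).indicator f) / gnorm Ψ (chi (cubeSet c l))

/-- `φ_{a,b}(t) = t^a (log(e+t))^b`. -/
def phiab (a b t : ℝ) : ℝ := t ^ a * Real.log (Real.exp 1 + t) ^ b

/-- Generalized inverse of `φ_{a,b}`. -/
def phiInv (a b s : ℝ) : ℝ := sInf {u : ℝ | 0 ≤ u ∧ s ≤ phiab a b u}

/-- The annulus `{x : r < ‖x‖ ≤ R}`. -/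
def annulus (r R : ℝ) : Set (Rn n) := {x | r < ‖x‖ ∧ ‖x‖ ≤ R}

/-- `K̄(t) = ess sup_{t<|x|≤2t} K(x)`. -/
def Kbar (K : Rn n → ℝ) (t : ℝ) : ℝ≥0∞ :=
  essSup (fun x => ENNReal.ofReal (K x)) (volume.restrict (annulus t (2 * t)))

/-- `K̃(t) = ∫_{|z|≤t} K(z) dz`. -/
def Ktilde (K : Rn n → ℝ) (t : ℝ) : ℝ :=
  ∫ z in {z : Rn n | ‖z‖ ≤ t}, K z

/-- The class 𝔇 of kernels, with explicit parameters `c`, `δ`, `ε`. -/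
def ClassDWith (K : Rn n → ℝ) (c δ ε : ℝ) : Prop :=
  LocallyIntegrable K ∧ (∀ x, 0 ≤ K x) ∧
  0 < c ∧ 0 < δ ∧ 0 ≤ ε ∧ ε < 1 ∧
  ∀ k : ℤ,
    essSup (fun x => ENNReal.ofReal (K x))
        (volume.restrict (annulus ((2:ℝ) ^ k) ((2:ℝ) ^ (k+1)))) ≤
      ENNReal.ofReal ((c / (2:ℝ) ^ (k * (n:ℤ))) *
        ∫ y in annulus (δ * (1-ε) * (2:ℝ) ^ k) (2 * δ * (1+ε) * (2:ℝ) ^ k), K y)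

/-- The class 𝔇 of kernels. -/
def ClassD (K : Rn n → ℝ) : Prop := ∃ c δ ε : ℝ, ClassDWith K c δ ε

/-- The half-open dyadic cube `2^{-k}([0,1)^n + m)`. -/
def dyadicSet (k : ℤ) (m : Fin n → ℤ) : Set (Rn n) :=
  {x | ∀ i, (m i : ℝ) * (2:ℝ) ^ (-k) ≤ x i ∧ x i < ((m i : ℝ) + 1) * (2:ℝ) ^ (-k)}

/-- The center of the dyadic cube `2^{-k}([0,1)^n + m)`. -/
def dyadicCenter (k : ℤ) (m : Fin n → ℤ) : Rn n :=
  (WithLp.equiv 2 (Fin n → ℝ)).symm fun i => ((m i : ℝ) + 1 / 2) * (2:ℝ) ^ (-k)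

end VarExp

namespace VarExpAux
open VarExp


lemma one_le_logE {t : ℝ} (ht : 0 ≤ t) : 1 ≤ Real.log (Real.exp 1 + t) := by
  rw [Real.le_log_iff_exp_le (by positivity)]
  linarith

lemma phiab_mono {a b u v : ℝ} (ha : 0 ≤ a) (hb : 0 ≤ b) (hu : 0 ≤ u) (huv : u ≤ v) :
    phiab a b u ≤ phiab a b v := by
  have h1 : (0:ℝ) ≤ Real.log (Real.exp 1 + u) := le_trans zero_le_one (one_le_logE hu)
  exact mul_le_mul (Real.rpow_le_rpow hu huv ha)
    (Real.rpow_le_rpow h1 (Real.log_le_log (by positivity) (by linarith)) hb)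
    (Real.rpow_nonneg h1 b) (Real.rpow_nonneg (le_trans hu huv) a)

lemma max_mem_phiset {a b s : ℝ} (ha : 1 ≤ a) (hb : 0 ≤ b) :
    0 ≤ max s 1 ∧ s ≤ phiab a b (max s 1) := by
  have hm1 : (1:ℝ) ≤ max s 1 := le_max_right _ _
  refine ⟨by linarith, ?_⟩
  have h1 : max s 1 ≤ max s 1 ^ a := by
    calc max s 1 = max s 1 ^ (1:ℝ) := (Real.rpow_one _).symm
    _ ≤ max s 1 ^ a := Real.rpow_le_rpow_of_exponent_le hm1 ha
  have h2 : (1:ℝ) ≤ Real.log (Real.exp 1 + max s 1) ^ b :=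
    Real.one_le_rpow (one_le_logE (by linarith)) hb
  calc s ≤ max s 1 := le_max_left _ _
  _ = max s 1 * 1 := (mul_one _).symm
  _ ≤ max s 1 ^ a * Real.log (Real.exp 1 + max s 1) ^ b :=
      mul_le_mul h1 h2 zero_le_one (Real.rpow_nonneg (by linarith) a)

lemma phiInv_nonneg (a b s : ℝ) : 0 ≤ phiInv a b s :=
  Real.sInf_nonneg fun _ hu => hu.1

lemma phiInv_le {a b s u : ℝ} (hu : 0 ≤ u) (h : s ≤ phiab a b u) : phiInv a b s ≤ u :=
  csInf_le ⟨0, fun _ hv => hv.1⟩ ⟨hu, h⟩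

lemma isClosed_phiset (a b s : ℝ) (ha : 0 ≤ a) :
    IsClosed {u : ℝ | 0 ≤ u ∧ s ≤ phiab a b u} := by
  have hset : {u : ℝ | 0 ≤ u ∧ s ≤ phiab a b u} = Ici 0 ∩ phiab a b ⁻¹' Ici s := by
    ext u; simp [Set.mem_setOf_eq, Set.mem_Ici, and_comm]
  rw [hset]
  have hcont : ContinuousOn (phiab a b) (Ici 0) := by
    apply ContinuousOn.mul
    · exact continuousOn_id.rpow_const fun u _ => Or.inr ha
    · apply ContinuousOn.rpow_const
      · apply ContinuousOn.log
        · exact (continuous_const.add continuous_id).continuousOn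
        · intro u hu
          have : (0:ℝ) < Real.exp 1 + u := by
            have := Real.exp_pos 1; simp only [Set.mem_Ici] at hu; linarith
          exact ne_of_gt this
      · intro u hu
        simp only [Set.mem_Ici] at hu
        exact Or.inl (ne_of_gt (lt_of_lt_of_le one_pos (one_le_logE hu)))
  exact hcont.preimage_isClosed_of_isClosed isClosed_Ici isClosed_Ici

lemma le_phiab_of_phiInv_le {a b s t : ℝ} (ha : 1 ≤ a) (hb : 0 ≤ b) (ht : 0 ≤ t)
    (h : phiInv a b s ≤ t) : s ≤ phiab a b t := by
  have hne : Set.Nonempty {u : ℝ | 0 ≤ u ∧ s ≤ phiab a b u} :=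
    ⟨max s 1, (max_mem_phiset ha hb).1, (max_mem_phiset ha hb).2⟩
  have hbdd : BddBelow {u : ℝ | 0 ≤ u ∧ s ≤ phiab a b u} := ⟨0, fun _ hv => hv.1⟩
  have hmem : sInf {u : ℝ | 0 ≤ u ∧ s ≤ phiab a b u} ∈ {u : ℝ | 0 ≤ u ∧ s ≤ phiab a b u} :=
    (isClosed_phiset a b s (by linarith)).csInf_mem hne hbdd
  exact le_trans hmem.2 (phiab_mono (by linarith) hb hmem.1 h)

lemma rpow_root_le {u X a : ℝ} (hu : 0 ≤ u) (hX : 0 ≤ X) (ha : 0 < a)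
    (h : X ^ a ≤ u ^ a) : X ≤ u := by
  by_contra hc
  push_neg at hc
  exact absurd h (not_le.mpr (Real.rpow_lt_rpow hu hc ha))



lemma phiInv_lower {a b s M : ℝ} (hs : 0 < s) (ha : 1 ≤ a) (hb : 0 ≤ b)
    (hM : 0 ≤ M) (hbM : b ≤ M * a) :
    2 ^ (-M) * s ^ (1/a) * Real.log (Real.exp 1 + s) ^ (-(b/a)) ≤ phiInv a b s := by
  have ha0 : (0:ℝ) < a := by linarith
  set L := Real.log (Real.exp 1 + s) with hLdef
  have hL1 : (1:ℝ) ≤ L := one_le_logE hs.le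
  have hL0 : (0:ℝ) < L := by linarith
  have h2M : (2:ℝ) ^ (-M) ≤ 1 := Real.rpow_le_one_of_one_le_of_nonpos one_le_two (by linarith)
  have h2M0 : (0:ℝ) < 2 ^ (-M) := Real.rpow_pos_of_pos two_pos _
  have hLb1 : L ^ (-(b/a)) ≤ 1 :=
    Real.rpow_le_one_of_one_le_of_nonpos hL1 (neg_nonpos.mpr (div_nonneg hb ha0.le))
  have hLb0 : (0:ℝ) < L ^ (-(b/a)) := Real.rpow_pos_of_pos hL0 _
  have hs1a0 : (0:ℝ) < s ^ (1/a) := Real.rpow_pos_of_pos hs _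
  have hTle : 2 ^ (-M) * s ^ (1/a) * L ^ (-(b/a)) ≤ s ^ (1/a) := by
    calc 2 ^ (-M) * s ^ (1/a) * L ^ (-(b/a)) ≤ 2 ^ (-M) * s ^ (1/a) * 1 :=
          mul_le_mul_of_nonneg_left hLb1 (by positivity)
    _ = 2 ^ (-M) * s ^ (1/a) := mul_one _
    _ ≤ 1 * s ^ (1/a) := mul_le_mul_of_nonneg_right h2M hs1a0.le
    _ = s ^ (1/a) := one_mul _
  unfold phiInv
  apply le_csInf
  · exact ⟨max s 1, (max_mem_phiset ha hb).1, (max_mem_phiset ha hb).2⟩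
  rintro u ⟨hu0, hu⟩
  have haa : 1/a * a = 1 := by field_simp
  rcases le_or_gt s 1 with hs1 | hs1
  · rcases le_or_gt u 1 with hu1 | hu1
    · -- s ≤ 1, u ≤ 1
      have hlogu0 : (0:ℝ) ≤ Real.log (Real.exp 1 + u) := le_trans zero_le_one (one_le_logE hu0)
      have hlog2 : Real.log (Real.exp 1 + u) ≤ 2 := by
        rw [Real.log_le_iff_le_exp (by positivity)]
        have he1 : Real.exp 1 < 2.7182818286 := Real.exp_one_lt_d9
        have he2 : (2.7182818283:ℝ) < Real.exp 1 := Real.exp_one_gt_d9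
        have : Real.exp 2 = Real.exp 1 * Real.exp 1 := by
          rw [← Real.exp_add]; norm_num
        nlinarith
      have h2 : Real.log (Real.exp 1 + u) ^ b ≤ 2 ^ (M*a) := by
        calc Real.log (Real.exp 1 + u) ^ b ≤ (2:ℝ) ^ b := Real.rpow_le_rpow hlogu0 hlog2 hb
        _ ≤ (2:ℝ) ^ (M*a) := Real.rpow_le_rpow_of_exponent_le one_le_two hbM
      have hua0 : (0:ℝ) ≤ u ^ a := Real.rpow_nonneg hu0 a
      have h3 : s ≤ u ^ a * 2 ^ (M*a) := by
        calc s ≤ u ^ a * Real.log (Real.exp 1 + u) ^ b := hu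
        _ ≤ u ^ a * 2 ^ (M*a) := mul_le_mul_of_nonneg_left h2 hua0
      have h2Ma0 : (0:ℝ) < 2 ^ (M*a) := Real.rpow_pos_of_pos two_pos _
      have h4 : s * 2 ^ (-(M*a)) ≤ u ^ a := by
        rw [Real.rpow_neg (by norm_num : (0:ℝ) ≤ 2)]
        rw [← div_le_iff₀ h2Ma0] at h3
        calc s * (2 ^ (M*a))⁻¹ = s / 2 ^ (M*a) := by ring
        _ ≤ u ^ a := h3
      have hXa : (s ^ (1/a) * 2 ^ (-M)) ^ a = s * 2 ^ (-(M*a)) := by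
        rw [Real.mul_rpow (Real.rpow_nonneg hs.le _) h2M0.le,
          ← Real.rpow_mul hs.le, ← Real.rpow_mul (by norm_num : (0:ℝ) ≤ 2), haa,
          Real.rpow_one, show -M * a = -(M*a) by ring]
      have h5 : s ^ (1/a) * 2 ^ (-M) ≤ u :=
        rpow_root_le hu0 (by positivity) ha0 (by rw [hXa]; exact h4)
      calc 2 ^ (-M) * s ^ (1/a) * L ^ (-(b/a)) ≤ 2 ^ (-M) * s ^ (1/a) * 1 :=
            mul_le_mul_of_nonneg_left hLb1 (by positivity)
      _ = s ^ (1/a) * 2 ^ (-M) := by ring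
      _ ≤ u := h5
    · -- s ≤ 1 < u
      have : s ^ (1/a) ≤ 1 := Real.rpow_le_one hs.le hs1 (by positivity)
      linarith
  · rcases le_or_gt u s with hus | hus
    · -- 1 < s, u ≤ s
      have hlogu0 : (0:ℝ) ≤ Real.log (Real.exp 1 + u) := le_trans zero_le_one (one_le_logE hu0)
      have hloguL : Real.log (Real.exp 1 + u) ≤ L := Real.log_le_log (by positivity) (by linarith)
      have h2 : Real.log (Real.exp 1 + u) ^ b ≤ L ^ b := Real.rpow_le_rpow hlogu0 hloguL hb
      have hua0 : (0:ℝ) ≤ u ^ a := Real.rpow_nonneg hu0 a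
      have hLb0' : (0:ℝ) < L ^ b := Real.rpow_pos_of_pos hL0 _
      have h3 : s ≤ u ^ a * L ^ b := by
        calc s ≤ u ^ a * Real.log (Real.exp 1 + u) ^ b := hu
        _ ≤ u ^ a * L ^ b := mul_le_mul_of_nonneg_left h2 hua0
      have h4 : s * L ^ (-b) ≤ u ^ a := by
        rw [Real.rpow_neg hL0.le]
        rw [← div_le_iff₀ hLb0'] at h3
        calc s * (L ^ b)⁻¹ = s / L ^ b := by ring
        _ ≤ u ^ a := h3
      have hXa : (s ^ (1/a) * L ^ (-(b/a))) ^ a = s * L ^ (-b) := by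
        rw [Real.mul_rpow (Real.rpow_nonneg hs.le _) hLb0.le,
          ← Real.rpow_mul hs.le, ← Real.rpow_mul hL0.le, haa, Real.rpow_one,
          show -(b/a) * a = -b by field_simp]
      have h5 : s ^ (1/a) * L ^ (-(b/a)) ≤ u :=
        rpow_root_le hu0 (by positivity) ha0 (by rw [hXa]; exact h4)
      calc 2 ^ (-M) * s ^ (1/a) * L ^ (-(b/a)) ≤ s ^ (1/a) * L ^ (-(b/a)) := by
            rw [mul_assoc]
            exact mul_le_of_le_one_left (by positivity) h2M
      _ ≤ u := h5
    · -- 1 < s < u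
      have h1 : s ^ (1/a) ≤ s := by
        calc s ^ (1/a) ≤ s ^ (1:ℝ) :=
              Real.rpow_le_rpow_of_exponent_le hs1.le (by rw [div_le_one ha0]; linarith)
        _ = s := Real.rpow_one s
      linarith [hTle]

lemma key_log_lb {pp M s A B : ℝ} (hpp : 1 ≤ pp) (hM : 0 ≤ M) (hs : 0 < s)
    (hAp : 1/pp ≤ A) (hB0 : 0 ≤ B) (hBM : B ≤ M) :
    min (1/(2*pp)) (1/(1+(4*pp*M+1)^2)) * Real.log (Real.exp 1 + s) ≤
      Real.log (Real.exp 1 + s ^ A * Real.log (Real.exp 1 + s) ^ (-B)) := by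
  have hpp0 : (0:ℝ) < pp := by linarith
  have hppM : (0:ℝ) ≤ pp*M := mul_nonneg hpp0.le hM
  set t₀ : ℝ := (4*pp*M+1)^2 with ht₀def
  have ht₀1 : (1:ℝ) ≤ t₀ := by nlinarith [sq_nonneg (pp*M)]
  set cc : ℝ := min (1/(2*pp)) (1/(1+t₀)) with hccdef
  set L := Real.log (Real.exp 1 + s) with hLdef
  have hL1 : (1:ℝ) ≤ L := one_le_logE hs.le
  have hL0 : (0:ℝ) < L := by linarith
  have hcc1 : cc ≤ 1/(1+t₀) := min_le_right _ _
  have hcc2 : cc ≤ 1/(2*pp) := min_le_left _ _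
  have hcc0 : 0 < cc := lt_min (by positivity) (by positivity)
  set E := s ^ A * L ^ (-B) with hEdef
  have hE0 : 0 < E := mul_pos (Real.rpow_pos_of_pos hs A) (Real.rpow_pos_of_pos hL0 _)
  clear_value t₀ cc L E
  rcases le_or_gt (Real.log s) t₀ with hcase | hcase
  · have hsle : s ≤ Real.exp t₀ := by
      rw [← Real.exp_log hs]
      exact Real.exp_le_exp.mpr hcase
    have hexp : Real.exp 1 ≤ Real.exp t₀ := Real.exp_le_exp.mpr (by linarith)
    have hLle : L ≤ 1 + t₀ := by
      have h1 : Real.exp 1 + s ≤ 2 * Real.exp t₀ := by linarith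
      calc L = Real.log (Real.exp 1 + s) := hLdef
      _ ≤ Real.log (2 * Real.exp t₀) := Real.log_le_log (by positivity) h1
      _ = Real.log 2 + t₀ := by
          rw [Real.log_mul two_ne_zero (Real.exp_ne_zero _), Real.log_exp]
      _ ≤ 1 + t₀ := by
          have h2 : Real.log 2 ≤ 2 - 1 := Real.log_le_sub_one_of_pos two_pos
          linarith
    have h1 : (1:ℝ) ≤ Real.log (Real.exp 1 + E) := one_le_logE hE0.le
    calc cc * L ≤ (1/(1+t₀)) * (1+t₀) :=
          mul_le_mul hcc1 hLle (by linarith) (by positivity)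
    _ = 1 := by field_simp
    _ ≤ Real.log (Real.exp 1 + E) := h1
  · set t := Real.log s with htdef
    have ht : t₀ ≤ t := hcase.le
    set r := Real.sqrt t with hrdef
    have hr0 : 0 ≤ r := Real.sqrt_nonneg _
    have hr : 4*pp*M+1 ≤ r := by
      have h1 : Real.sqrt t₀ ≤ r := Real.sqrt_le_sqrt ht
      rwa [ht₀def, Real.sqrt_sq (by positivity)] at h1
    have hr2 : r^2 = t := Real.sq_sqrt (by linarith)
    clear_value t r
    have ht1 : (1:ℝ) ≤ t := by linarith
    have hse : Real.exp 1 ≤ s := by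
      calc Real.exp 1 ≤ Real.exp t := Real.exp_le_exp.mpr (by linarith)
      _ = s := by rw [htdef, Real.exp_log hs]
    have hL_le : L ≤ 1 + t := by
      have he2 : (2.7182818283:ℝ) < Real.exp 1 := Real.exp_one_gt_d9
      have h2 : Real.exp 1 + s ≤ Real.exp 1 * s := by
        nlinarith [mul_le_mul_of_nonneg_left hse (show (0:ℝ) ≤ Real.exp 1 - 1 by linarith)]
      calc L = Real.log (Real.exp 1 + s) := hLdef
      _ ≤ Real.log (Real.exp 1 * s) := Real.log_le_log (by positivity) h2
      _ = 1 + t := by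
          rw [Real.log_mul (Real.exp_ne_zero 1) (ne_of_gt hs), Real.log_exp, ← htdef]
    have hlogL : Real.log L ≤ 2 * r := by
      have h0 : Real.log L ≤ Real.log (1+t) := Real.log_le_log hL0 hL_le
      have h1 : Real.log (1+t) = 2 * Real.log (Real.sqrt (1+t)) := by
        rw [Real.log_sqrt (by linarith)]; ring
      have h2 : Real.log (Real.sqrt (1+t)) ≤ Real.sqrt (1+t) - 1 :=
        Real.log_le_sub_one_of_pos (Real.sqrt_pos.mpr (by linarith))
      have h3 : Real.sqrt (1+t) ≤ 1 + r := by
        calc Real.sqrt (1+t) ≤ Real.sqrt ((1+r)^2) := Real.sqrt_le_sqrt (by nlinarith [hr2, hr0])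
        _ = 1 + r := Real.sqrt_sq (by positivity)
      linarith
    have hlogE : Real.log E = A * t + (-B) * Real.log L := by
      rw [hEdef, Real.log_mul (ne_of_gt (Real.rpow_pos_of_pos hs A))
        (ne_of_gt (Real.rpow_pos_of_pos hL0 _)), Real.log_rpow hs, Real.log_rpow hL0, ← htdef]
    have hfinal : cc * L ≤ A * t + (-B) * Real.log L := by
      have hAt : t/pp ≤ A * t := by
        have := mul_le_mul_of_nonneg_right hAp (by linarith : (0:ℝ) ≤ t)
        calc t/pp = (1/pp) * t := by ring
        _ ≤ A * t := this
      have hlogL0 : 0 ≤ Real.log L := Real.log_nonneg hL1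
      have hBlog : B * Real.log L ≤ M * (2*r) := mul_le_mul hBM hlogL hlogL0 hM
      have hccL : cc * L ≤ (1/(2*pp)) * (1+t) :=
        mul_le_mul hcc2 hL_le (by linarith) (by positivity)
      have hquad : 0 ≤ t - 4*pp*M*r - 1 := by
        have h9 := mul_le_mul_of_nonneg_left hr (show (0:ℝ) ≤ r by linarith)
        have h10 : r * r = t := by rw [← hr2]; ring
        linarith [h9, h10, hr, hppM]
      have h6 : 1 + t ≤ 2*t - 4*pp*M*r := by linarith
      have h7 : (1/(2*pp)) * (1+t) ≤ (1/(2*pp)) * (2*t - 4*pp*M*r) :=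
        mul_le_mul_of_nonneg_left h6 (by positivity)
      have h8 : (1/(2*pp)) * (2*t - 4*pp*M*r) = t/pp - M*(2*r) := by
        field_simp
        ring
      linarith
    calc cc * L ≤ Real.log E := by rw [hlogE]; exact hfinal
    _ ≤ Real.log (Real.exp 1 + E) := Real.log_le_log hE0 (by linarith [Real.exp_pos 1])
lemma phiInv_upper {pp M s A B : ℝ} (hpp : 1 ≤ pp) (hM : 0 ≤ M) (hs : 0 < s)
    (hA0 : 0 < A) (hA1 : A ≤ 1) (hAp : 1/pp ≤ A) (hB0 : 0 ≤ B) (hBM : B ≤ M) :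
    phiInv (1/A) (B/A) s ≤
      (min (1/(2*pp)) (1/(1+(4*pp*M+1)^2)))⁻¹ ^ (M*pp) *
        (s ^ A * Real.log (Real.exp 1 + s) ^ (-B)) := by
  have hpp0 : (0:ℝ) < pp := by linarith
  set t₀ : ℝ := (4*pp*M+1)^2 with ht₀def
  have ht₀0 : (0:ℝ) ≤ t₀ := sq_nonneg _
  set cc : ℝ := min (1/(2*pp)) (1/(1+t₀)) with hccdef
  have hcc0 : 0 < cc := lt_min (by positivity) (by positivity)
  have hcc1 : cc ≤ 1 := le_trans (min_le_left _ _) (by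
    rw [div_le_one (by positivity)]; linarith)
  set C1 : ℝ := cc⁻¹ ^ (M*pp) with hC1def
  have hC1 : 1 ≤ C1 := Real.one_le_rpow (one_le_inv_iff₀.mpr ⟨hcc0, hcc1⟩) (by positivity)
  have hC1p : 0 < C1 := lt_of_lt_of_le one_pos hC1
  set L := Real.log (Real.exp 1 + s) with hLdef
  have hL1 : (1:ℝ) ≤ L := one_le_logE hs.le
  have hL0 : (0:ℝ) < L := by linarith
  set E := s ^ A * L ^ (-B) with hEdef
  have hE0 : 0 < E := mul_pos (Real.rpow_pos_of_pos hs A) (Real.rpow_pos_of_pos hL0 _)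
  have hu0 : 0 < C1 * E := mul_pos hC1p hE0
  apply phiInv_le hu0.le
  have hEu : E ≤ C1 * E := le_mul_of_one_le_left hE0.le hC1
  have hkeyE := key_log_lb hpp hM hs hAp hB0 hBM
  have hkey : cc * L ≤ Real.log (Real.exp 1 + C1 * E) := by
    refine le_trans hkeyE ?_
    exact Real.log_le_log (by positivity) (by linarith)
  have hlogu0 : (0:ℝ) ≤ Real.log (Real.exp 1 + C1 * E) :=
    le_trans zero_le_one (one_le_logE hu0.le)
  have hBA0 : 0 ≤ B/A := div_nonneg hB0 hA0.le
  have hBA : B/A ≤ M*pp := by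
    rw [div_le_iff₀ hA0]
    have h1 : 1/pp * pp ≤ A * pp := mul_le_mul_of_nonneg_right hAp hpp0.le
    have h2 : 1/pp * pp = 1 := by field_simp
    have h3 : (1:ℝ) ≤ A * pp := by linarith
    calc B ≤ M := hBM
    _ = M * 1 := (mul_one M).symm
    _ ≤ M * (pp * A) := by
        apply mul_le_mul_of_nonneg_left _ hM
        linarith [h3]
    _ = M * pp * A := by ring
  -- compute (C1 * E) ^ (1/A)
  have hA' : A * (1/A) = 1 := by field_simp
  have hpow : (C1 * E) ^ (1/A) = C1 ^ (1/A) * (s * L ^ (-(B/A))) := by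
    rw [hEdef, Real.mul_rpow hC1p.le hE0.le,
      Real.mul_rpow (Real.rpow_nonneg hs.le _) (Real.rpow_nonneg hL0.le _),
      ← Real.rpow_mul hs.le, ← Real.rpow_mul hL0.le, hA', Real.rpow_one,
      show -B * (1/A) = -(B/A) by field_simp]
  have hmain : 1 ≤ C1 ^ (1/A) * (L ^ (-(B/A)) * Real.log (Real.exp 1 + C1 * E) ^ (B/A)) := by
    have h2 : cc ^ (M*pp) ≤ L ^ (-(B/A)) * Real.log (Real.exp 1 + C1 * E) ^ (B/A) := by
      have e1 : cc ^ (M*pp) ≤ cc ^ (B/A) := Real.rpow_le_rpow_of_exponent_ge hcc0 hcc1 hBA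
      have e2 : cc ^ (B/A) ≤ (Real.log (Real.exp 1 + C1 * E) / L) ^ (B/A) := by
        apply Real.rpow_le_rpow hcc0.le _ hBA0
        rw [le_div_iff₀ hL0]
        calc cc * L ≤ Real.log (Real.exp 1 + C1 * E) := hkey
        _ = _ := rfl
      have e3 : (Real.log (Real.exp 1 + C1 * E) / L) ^ (B/A)
          = L ^ (-(B/A)) * Real.log (Real.exp 1 + C1 * E) ^ (B/A) := by
        rw [Real.div_rpow hlogu0 hL0.le, Real.rpow_neg hL0.le]
        ring
      calc cc ^ (M*pp) ≤ cc ^ (B/A) := e1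
      _ ≤ _ := le_of_le_of_eq e2 e3
    have h3 : C1 ≤ C1 ^ (1/A) := by
      calc C1 = C1 ^ (1:ℝ) := (Real.rpow_one _).symm
      _ ≤ C1 ^ (1/A) := Real.rpow_le_rpow_of_exponent_le hC1 (by
          rw [le_div_iff₀ hA0]; linarith)
    have h4 : C1 * cc ^ (M*pp) = 1 := by
      rw [hC1def, ← Real.mul_rpow (inv_nonneg.mpr hcc0.le) hcc0.le,
        inv_mul_cancel₀ (ne_of_gt hcc0), Real.one_rpow]
    calc (1:ℝ) = C1 * cc ^ (M*pp) := h4.symm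
    _ ≤ C1 ^ (1/A) * (L ^ (-(B/A)) * Real.log (Real.exp 1 + C1 * E) ^ (B/A)) :=
        mul_le_mul h3 h2 (Real.rpow_nonneg hcc0.le _) (Real.rpow_nonneg (by linarith) _)
  show s ≤ phiab (1/A) (B/A) (C1 * E)
  unfold phiab
  rw [hpow]
  calc s = s * 1 := (mul_one s).symm
  _ ≤ s * (C1 ^ (1/A) * (L ^ (-(B/A)) * Real.log (Real.exp 1 + C1 * E) ^ (B/A))) :=
      mul_le_mul_of_nonneg_left hmain hs.le
  _ = C1 ^ (1/A) * (s * L ^ (-(B/A))) * Real.log (Real.exp 1 + C1 * E) ^ (B/A) := by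
      ring
lemma cont_of_modulus {n : ℕ} {f : Rn n → ℝ} {C : ℝ} (ω : ℝ → ℝ)
    (hb : ∀ x y : Rn n, |f x - f y| ≤ C / ω ‖x - y‖)
    (hω : ∀ ε, 0 < ε → ∃ δ, 0 < δ ∧ ∀ d, 0 < d → d < δ → C / ω d < ε) :
    Continuous f := by
  rw [Metric.continuous_iff]
  intro x ε hε
  obtain ⟨δ, hδ0, hδ⟩ := hω ε hε
  refine ⟨δ, hδ0, fun y hy => ?_⟩
  rcases eq_or_ne y x with rfl | hne
  · simpa using hε
  · have hd : 0 < dist y x := dist_pos.mpr hne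
    calc dist (f y) (f x) = |f y - f x| := Real.dist_eq _ _
    _ ≤ C / ω ‖y - x‖ := hb y x
    _ = C / ω (dist y x) := by rw [dist_eq_norm]
    _ < ε := hδ _ hd hy

lemma logHolder_continuous {n : ℕ} {p : Rn n → ℝ} {C : ℝ} (hC : 0 < C)
    (h : ∀ x y : Rn n, |p x - p y| ≤ C / Real.log (Real.exp 1 + 1/‖x - y‖)) :
    Continuous p := by
  apply cont_of_modulus (fun d => Real.log (Real.exp 1 + 1/d)) h
  intro ε hε
  refine ⟨Real.exp (-(C/ε)), Real.exp_pos _, fun d hd0 hdδ => ?_⟩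
  have hCe : 0 < C/ε := by positivity
  have h2 : Real.exp (C/ε) < 1/d := by
    rw [Real.exp_neg] at hdδ
    rw [lt_div_iff₀ hd0]
    calc Real.exp (C/ε) * d < Real.exp (C/ε) * (Real.exp (C/ε))⁻¹ :=
          mul_lt_mul_of_pos_left hdδ (Real.exp_pos _)
    _ = 1 := mul_inv_cancel₀ (Real.exp_ne_zero _)
  have h1 : C/ε < Real.log (Real.exp 1 + 1/d) := by
    calc C/ε = Real.log (Real.exp (C/ε)) := (Real.log_exp _).symm
    _ < Real.log (1/d) := Real.log_lt_log (Real.exp_pos _) h2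
    _ ≤ Real.log (Real.exp 1 + 1/d) := Real.log_le_log (by positivity) (by
        linarith [Real.exp_pos 1])
  calc C / Real.log (Real.exp 1 + 1/d) < C / (C/ε) := by
        apply div_lt_div_of_pos_left hC hCe h1
  _ = ε := by field_simp

lemma logLogHolder_continuous {n : ℕ} {q : Rn n → ℝ} {C : ℝ} (hC : 0 < C)
    (h : ∀ x y : Rn n,
      |q x - q y| ≤ C / Real.log (Real.exp 1 + Real.log (Real.exp 1 + 1/‖x - y‖))) :
    Continuous q := by
  apply cont_of_modulus (fun d => Real.log (Real.exp 1 + Real.log (Real.exp 1 + 1/d))) h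
  intro ε hε
  refine ⟨Real.exp (-(Real.exp (C/ε))), Real.exp_pos _, fun d hd0 hdδ => ?_⟩
  have hCe : 0 < C/ε := by positivity
  have h2 : Real.exp (Real.exp (C/ε)) < 1/d := by
    rw [Real.exp_neg] at hdδ
    rw [lt_div_iff₀ hd0]
    calc Real.exp (Real.exp (C/ε)) * d
        < Real.exp (Real.exp (C/ε)) * (Real.exp (Real.exp (C/ε)))⁻¹ :=
          mul_lt_mul_of_pos_left hdδ (Real.exp_pos _)
    _ = 1 := mul_inv_cancel₀ (Real.exp_ne_zero _)
  have h3 : Real.exp (C/ε) < Real.log (Real.exp 1 + 1/d) := by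
    calc Real.exp (C/ε) = Real.log (Real.exp (Real.exp (C/ε))) := (Real.log_exp _).symm
    _ < Real.log (1/d) := Real.log_lt_log (Real.exp_pos _) h2
    _ ≤ Real.log (Real.exp 1 + 1/d) := Real.log_le_log (by positivity) (by
        linarith [Real.exp_pos 1])
  have h1 : C/ε < Real.log (Real.exp 1 + Real.log (Real.exp 1 + 1/d)) := by
    calc C/ε = Real.log (Real.exp (C/ε)) := (Real.log_exp _).symm
    _ < Real.log (Real.exp 1 + Real.log (Real.exp 1 + 1/d)) := by
        apply Real.log_lt_log (Real.exp_pos _)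
        linarith [Real.exp_pos 1]
  calc C / Real.log (Real.exp 1 + Real.log (Real.exp 1 + 1/d)) < C / (C/ε) := by
        apply div_lt_div_of_pos_left hC hCe h1
  _ = ε := by field_simp

lemma measurable_phiInv_comp {n : ℕ} {p q : Rn n → ℝ} (hpc : Continuous p)
    (hqc : Continuous q) (hp1 : ∀ x, 1 ≤ p x) (hq0 : ∀ x, 0 ≤ q x) (s : ℝ) :
    Measurable fun x : Rn n => phiInv (p x) (q x) s := by
  apply measurable_of_Iic
  intro t
  rcases lt_or_ge t 0 with ht | ht
  · have hempty : (fun x : Rn n => phiInv (p x) (q x) s) ⁻¹' Set.Iic t = ∅ := by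
      ext x
      simp only [Set.mem_preimage, Set.mem_Iic, Set.mem_empty_iff_false, iff_false, not_le]
      exact lt_of_lt_of_le ht (phiInv_nonneg _ _ _)
    rw [hempty]
    exact MeasurableSet.empty
  · have hset : (fun x : Rn n => phiInv (p x) (q x) s) ⁻¹' Set.Iic t
        = (fun x => phiab (p x) (q x) t) ⁻¹' Set.Ici s := by
      ext x
      simp only [Set.mem_preimage, Set.mem_Iic, Set.mem_Ici]
      exact ⟨fun h => le_phiab_of_phiInv_le (hp1 x) (hq0 x) ht h,
        fun h => phiInv_le ht h⟩
    rw [hset]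
    rcases ht.eq_or_lt with heq | ht0
    · have hzero : (fun x : Rn n => phiab (p x) (q x) t) = fun _ => 0 := by
        funext x
        rw [← heq]
        unfold phiab
        rw [Real.zero_rpow (by linarith [hp1 x] : p x ≠ 0)]
        ring
      rw [hzero]
      exact measurable_const measurableSet_Ici
    · have hLt : (0:ℝ) < Real.log (Real.exp 1 + t) :=
        lt_of_lt_of_le one_pos (one_le_logE ht)
      have hfe : (fun x : Rn n => phiab (p x) (q x) t) = fun x =>
          Real.exp (Real.log t * p x) * Real.exp (Real.log (Real.log (Real.exp 1 + t)) * q x) := by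
        funext x
        unfold phiab
        rw [Real.rpow_def_of_pos ht0, Real.rpow_def_of_pos hLt]
      rw [hfe]
      exact (((Real.continuous_exp.comp (continuous_const.mul hpc)).mul
        (Real.continuous_exp.comp (continuous_const.mul hqc))).measurable) measurableSet_Ici
lemma cube_volume {n : ℕ} (c : Rn n) (l : ℝ) :
    MeasureTheory.volume (cubeSet c l) = ENNReal.ofReal l ^ n := by
  have hpre : cubeSet c l = (MeasurableEquiv.toLp 2 (Fin n → ℝ)).symm ⁻¹'
      (Set.univ.pi fun i => Set.Icc (c i - l/2) (c i + l/2)) := by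
    ext x
    simp only [cubeSet, Set.mem_preimage, Set.mem_pi, Set.mem_univ, forall_true_left,
      Set.mem_Icc, Set.mem_setOf_eq, MeasurableEquiv.coe_toLp_symm]
    constructor
    · intro hx i
      have := abs_le.mp (hx i)
      constructor <;> [linarith [this.1]; linarith [this.2]]
    · intro hx i
      rw [abs_le]
      constructor <;> [linarith [(hx i).1]; linarith [(hx i).2]]
  rw [hpre, (EuclideanSpace.volume_preserving_symm_measurableEquiv_toLp (Fin n)).measure_preimage
    ((MeasurableSet.univ_pi fun i => measurableSet_Icc).nullMeasurableSet)]
  rw [MeasureTheory.volume_pi_pi]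
  have hIcc : ∀ i : Fin n, MeasureTheory.volume (Set.Icc (c i - l/2) (c i + l/2))
      = ENNReal.ofReal l := by
    intro i
    rw [Real.volume_Icc]
    congr 1
    ring
  simp_rw [hIcc]
  rw [Finset.prod_const, Finset.card_univ, Fintype.card_fin]

lemma integrable_of_bdd {n : ℕ} {μ : MeasureTheory.Measure (Rn n)}
    [MeasureTheory.IsFiniteMeasure μ] {f : Rn n → ℝ}
    (hf : MeasureTheory.AEStronglyMeasurable f μ) (K : ℝ) (h : ∀ x, |f x| ≤ K) :
    MeasureTheory.Integrable f μ :=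
  (MeasureTheory.integrable_const K).mono' hf
    (Filter.Eventually.of_forall fun x => by rw [Real.norm_eq_abs]; exact h x)

lemma avg_mono {n : ℕ} {μ : MeasureTheory.Measure (Rn n)}
    [MeasureTheory.IsFiniteMeasure μ] {f g : Rn n → ℝ}
    (hf : MeasureTheory.Integrable f μ) (hg : MeasureTheory.Integrable g μ)
    (h : ∀ x, f x ≤ g x) : ⨍ x, f x ∂μ ≤ ⨍ x, g x ∂μ := by
  rw [MeasureTheory.average_eq, MeasureTheory.average_eq]
  simp only [smul_eq_mul]
  exact mul_le_mul_of_nonneg_left (MeasureTheory.integral_mono hf hg h) (by positivity)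

end VarExpAux

open VarExpAux

open VarExp in
/-- `φ^{-1}_{1/(1/p)_Q, (q/p)_Q/(1/p)_Q}(1/|Q|) ≲ ⨍_Q φ^{-1}_{p(x),q(x)}(1/|Q|) dx`. -/
theorem statement5 (n : ℕ) (p q : Rn n → ℝ)
    (hp : LogHolder p) (pp : ℝ) (hpbd : ∀ x, 1 ≤ p x ∧ p x ≤ pp)
    (hq : LogLogHolder q) (hq0 : ∀ x, 0 ≤ q x) :
    ∃ C : ℝ, 0 < C ∧ ∀ (c : Rn n) (l : ℝ), 0 < l →
      phiInv (1 / cavg c l fun x => 1 / p x)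
          ((cavg c l fun x => q x / p x) / cavg c l fun x => 1 / p x) (1 / l ^ n) ≤
        C * ⨍ x in cubeSet c l, phiInv (p x) (q x) (1 / l ^ n) := by
  obtain ⟨Cp, pinf, hCp, hpH, -⟩ := hp
  obtain ⟨⟨M₀, hM₀⟩, Cq, hCq, hqH⟩ := hq
  have hpc : Continuous p := logHolder_continuous hCp hpH
  have hqc : Continuous q := logLogHolder_continuous hCq hqH
  set M : ℝ := max M₀ 0 with hMdef
  have hM0 : (0:ℝ) ≤ M := le_max_right _ _
  have hqM : ∀ x, q x ≤ M := fun x =>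
    le_trans (le_trans (le_abs_self _) (hM₀ x)) (le_max_left _ _)
  set P : ℝ := max pp 1 with hPdef
  have hP1 : (1:ℝ) ≤ P := le_max_right _ _
  have hP0 : (0:ℝ) < P := by linarith
  have hpP : ∀ x, p x ≤ P := fun x => le_trans (hpbd x).2 (le_max_left _ _)
  have hp1 : ∀ x, 1 ≤ p x := fun x => (hpbd x).1
  have hppos : ∀ x, (0:ℝ) < p x := fun x => lt_of_lt_of_le one_pos (hp1 x)
  set cc : ℝ := min (1/(2*P)) (1/(1+(4*P*M+1)^2)) with hccdef
  have hcc0 : 0 < cc := lt_min (by positivity) (by positivity)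
  set C1 : ℝ := cc⁻¹ ^ (M*P) with hC1def
  have hC1pos : 0 < C1 := Real.rpow_pos_of_pos (inv_pos.mpr hcc0) _
  have h2Mpos : (0:ℝ) < 2 ^ M := Real.rpow_pos_of_pos two_pos _
  refine ⟨C1 * 2 ^ M, mul_pos hC1pos h2Mpos, ?_⟩
  intro c l hl
  set μ := MeasureTheory.volume.restrict (cubeSet c l) with hμdef
  have hμuniv : μ Set.univ = ENNReal.ofReal l ^ n := by
    rw [hμdef, MeasureTheory.Measure.restrict_apply_univ, cube_volume]
  haveI hμfin : MeasureTheory.IsFiniteMeasure μ :=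
    ⟨by rw [hμuniv]; exact ENNReal.pow_lt_top ENNReal.ofReal_lt_top⟩
  haveI hμne : NeZero μ := by
    refine ⟨fun hzero => ?_⟩
    have h1 : μ Set.univ = 0 := by rw [hzero]; rfl
    rw [hμuniv] at h1
    have h2 : ENNReal.ofReal l ≠ 0 := by
      simp only [ne_eq, ENNReal.ofReal_eq_zero, not_le]; exact hl
    exact (pow_ne_zero n h2) h1
  set s : ℝ := 1 / l ^ n with hsdef
  have hs0 : 0 < s := by positivity
  set L : ℝ := Real.log (Real.exp 1 + s) with hLdef
  have hL1 : (1:ℝ) ≤ L := one_le_logE hs0.le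
  have hL0 : (0:ℝ) < L := by linarith
  -- continuity and integrability of auxiliary functions
  have hinvp_cont : Continuous fun x => 1 / p x :=
    continuous_const.div hpc fun x => (hppos x).ne'
  have hqp_cont : Continuous fun x => q x / p x :=
    hqc.div hpc fun x => (hppos x).ne'
  have hint1 : MeasureTheory.Integrable (fun x => 1 / p x) μ := by
    apply integrable_of_bdd hinvp_cont.aestronglyMeasurable 1
    intro x
    rw [abs_of_nonneg (div_nonneg zero_le_one (hppos x).le)]
    rw [div_le_one (hppos x)]
    exact hp1 x
  have hint2 : MeasureTheory.Integrable (fun x => q x / p x) μ := by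
    apply integrable_of_bdd hqp_cont.aestronglyMeasurable M
    intro x
    rw [abs_of_nonneg (div_nonneg (hq0 x) (hppos x).le)]
    exact le_trans (div_le_self (hq0 x) (hp1 x)) (hqM x)
  set A : ℝ := cavg c l fun x => 1 / p x with hAdef
  set B : ℝ := cavg c l fun x => q x / p x with hBdef
  have hAavg : A = ⨍ x, 1 / p x ∂μ := rfl
  have hBavg : B = ⨍ x, q x / p x ∂μ := rfl
  have hA_ub : A ≤ 1 := by
    rw [hAavg]
    have h1 : ⨍ x, 1 / p x ∂μ ≤ ⨍ _x, (1:ℝ) ∂μ := by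
      apply avg_mono hint1 (MeasureTheory.integrable_const 1)
      intro x
      rw [div_le_one (hppos x)]
      exact hp1 x
    rwa [MeasureTheory.average_const] at h1
  have hA_lb : 1/P ≤ A := by
    rw [hAavg]
    have h1 : ⨍ _x, (1/P : ℝ) ∂μ ≤ ⨍ x, 1 / p x ∂μ := by
      apply avg_mono (MeasureTheory.integrable_const _) hint1
      intro x
      exact one_div_le_one_div_of_le (hppos x) (hpP x)
    rwa [MeasureTheory.average_const] at h1
  have hA0 : 0 < A := lt_of_lt_of_le (by positivity) hA_lb
  have hB_lb : 0 ≤ B := by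
    rw [hBdef]
    have h1 : ⨍ _x, (0:ℝ) ∂μ ≤ ⨍ x, q x / p x ∂μ := by
      apply avg_mono (MeasureTheory.integrable_const _) hint2
      intro x
      exact div_nonneg (hq0 x) (hppos x).le
    rwa [MeasureTheory.average_const] at h1
  have hB_ub : B ≤ M := by
    rw [hBdef]
    have h1 : ⨍ x, q x / p x ∂μ ≤ ⨍ _x, (M:ℝ) ∂μ := by
      apply avg_mono hint2 (MeasureTheory.integrable_const _)
      intro x
      exact le_trans (div_le_self (hq0 x) (hp1 x)) (hqM x)
    rwa [MeasureTheory.average_const] at h1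
  -- the function g and its average
  set g : Rn n → ℝ := fun x => Real.log s * (1 / p x) - Real.log L * (q x / p x) with hgdef
  have hg_cont : Continuous g :=
    (continuous_const.mul hinvp_cont).sub (continuous_const.mul hqp_cont)
  have hg_bdd : ∀ x, |g x| ≤ |Real.log s| + |Real.log L| * M := by
    intro x
    have h1 : |Real.log s * (1 / p x)| ≤ |Real.log s| := by
      rw [abs_mul]
      have h2 : |1 / p x| ≤ 1 := by
        rw [abs_of_nonneg (div_nonneg zero_le_one (hppos x).le), div_le_one (hppos x)]
        exact hp1 x
      calc |Real.log s| * |1 / p x| ≤ |Real.log s| * 1 :=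
            mul_le_mul_of_nonneg_left h2 (abs_nonneg _)
      _ = |Real.log s| := mul_one _
    have h3 : |Real.log L * (q x / p x)| ≤ |Real.log L| * M := by
      rw [abs_mul]
      apply mul_le_mul_of_nonneg_left _ (abs_nonneg _)
      rw [abs_of_nonneg (div_nonneg (hq0 x) (hppos x).le)]
      exact le_trans (div_le_self (hq0 x) (hp1 x)) (hqM x)
    calc |g x| ≤ |Real.log s * (1 / p x)| + |Real.log L * (q x / p x)| := abs_sub _ _
    _ ≤ |Real.log s| + |Real.log L| * M := add_le_add h1 h3
  have hint_g : MeasureTheory.Integrable g μ :=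
    integrable_of_bdd hg_cont.aestronglyMeasurable _ hg_bdd
  have hint_expg : MeasureTheory.Integrable (fun x => Real.exp (g x)) μ := by
    apply integrable_of_bdd (Real.continuous_exp.comp hg_cont).aestronglyMeasurable
      (Real.exp (|Real.log s| + |Real.log L| * M))
    intro x
    show |Real.exp (g x)| ≤ _
    rw [abs_of_nonneg (Real.exp_pos _).le]
    exact Real.exp_le_exp.mpr (le_trans (le_abs_self _) (hg_bdd x))
  have havg_g : ⨍ x, g x ∂μ = Real.log s * A - Real.log L * B := by
    have hi1 : MeasureTheory.Integrable (fun x => Real.log s * (1 / p x)) μ :=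
      hint1.const_mul _
    have hi2 : MeasureTheory.Integrable (fun x => Real.log L * (q x / p x)) μ :=
      hint2.const_mul _
    have hsub : ∫ x, g x ∂μ
        = Real.log s * ∫ x, 1 / p x ∂μ - Real.log L * ∫ x, q x / p x ∂μ := by
      rw [hgdef]
      rw [MeasureTheory.integral_sub hi1 hi2, MeasureTheory.integral_const_mul,
        MeasureTheory.integral_const_mul]
    rw [MeasureTheory.average_eq, hsub, hAavg, hBavg, MeasureTheory.average_eq,
      MeasureTheory.average_eq]
    simp only [smul_eq_mul]
    ring
  -- the integrand f
  set f : Rn n → ℝ := fun x => phiInv (p x) (q x) s with hfdef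
  have hf_meas : Measurable f := measurable_phiInv_comp hpc hqc hp1 hq0 s
  have hf_nonneg : ∀ x, 0 ≤ f x := fun x => phiInv_nonneg _ _ _
  have hf_bdd : ∀ x, |f x| ≤ max s 1 := by
    intro x
    rw [abs_of_nonneg (hf_nonneg x)]
    exact phiInv_le (max_mem_phiset (hp1 x) (hq0 x)).1 (max_mem_phiset (hp1 x) (hq0 x)).2
  have hint_f : MeasureTheory.Integrable f μ :=
    integrable_of_bdd hf_meas.aestronglyMeasurable _ hf_bdd
  -- pointwise comparison
  have hpt : ∀ x, Real.exp (g x) ≤ 2 ^ M * f x := by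
    intro x
    have h7 := phiInv_lower (a := p x) (b := q x) (M := M) hs0 (hp1 x) (hq0 x) hM0
      (le_trans (hqM x) (le_mul_of_one_le_right hM0 (hp1 x)))
    have hEg : Real.exp (g x) = s ^ (1 / p x) * L ^ (-(q x / p x)) := by
      rw [Real.rpow_def_of_pos hs0, Real.rpow_def_of_pos hL0, ← Real.exp_add, hgdef]
      congr 1
      ring
    rw [hEg]
    have h8 : (2:ℝ) ^ (-M) = (2 ^ M)⁻¹ := Real.rpow_neg (by norm_num) M
    rw [h8] at h7
    have h9 : s ^ (1 / p x) * L ^ (-(q x / p x))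
        = 2 ^ M * ((2 ^ M)⁻¹ * s ^ (1 / p x) * L ^ (-(q x / p x))) := by
      field_simp
    rw [h9]
    exact mul_le_mul_of_nonneg_left h7 h2Mpos.le
  -- Jensen's inequality
  have hjensen : Real.exp (⨍ x, g x ∂μ) ≤ ⨍ x, Real.exp (g x) ∂μ := by
    have := convexOn_exp.map_average_le Real.continuous_exp.continuousOn isClosed_univ
      (Filter.Eventually.of_forall fun x => Set.mem_univ (g x)) hint_g
      (by exact hint_expg)
    exact this
  -- chain of averages
  have hchain : ⨍ x, Real.exp (g x) ∂μ ≤ 2 ^ M * ⨍ x, f x ∂μ := by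
    have h1 : ⨍ x, Real.exp (g x) ∂μ ≤ ⨍ x, 2 ^ M * f x ∂μ :=
      avg_mono hint_expg (hint_f.const_mul _) hpt
    have h2 : ⨍ x, 2 ^ M * f x ∂μ = 2 ^ M * ⨍ x, f x ∂μ := by
      rw [MeasureTheory.average_eq, MeasureTheory.average_eq,
        MeasureTheory.integral_const_mul]
      simp only [smul_eq_mul]
      ring
    linarith
  -- upper bound for the left-hand side
  have hupper := phiInv_upper (pp := P) (M := M) hP1 hM0 hs0 hA0 hA_ub hA_lb hB_lb hB_ub
  have hEavg : s ^ A * L ^ (-B) = Real.exp (⨍ x, g x ∂μ) := by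
    rw [havg_g, Real.rpow_def_of_pos hs0, Real.rpow_def_of_pos hL0, ← Real.exp_add]
    congr 1
    ring
  calc phiInv (1/A) (B/A) s ≤ C1 * (s ^ A * L ^ (-B)) := hupper
  _ = C1 * Real.exp (⨍ x, g x ∂μ) := by rw [hEavg]
  _ ≤ C1 * ⨍ x, Real.exp (g x) ∂μ := mul_le_mul_of_nonneg_left hjensen hC1pos.le
  _ ≤ C1 * (2 ^ M * ⨍ x, f x ∂μ) := mul_le_mul_of_nonneg_left hchain hC1pos.le
  _ = C1 * 2 ^ M * ⨍ x, f x ∂μ := by ring
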